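/- If x, y ∈ ℝ^n are linearly independent and z ∈ ℝ^m is nonzero, then the tensor C2(x,y,z) = (1/2)(x∘y∘z − y∘x∘z) has tensor rank exactly 2. -/

import Mathlib

noncomputable def C2 {n m : ℕ} (x y : Fin n → ℝ) (z : Fin m → ℝ) :
    Fin n → Fin n → Fin m → ℝ :=
  fun i j k => (1/2 : ℝ) * (x i * y j * z k - y i * x j * z k)

/-- The tensor rank of an order-3 tensor: a set of achievable numbers of rank-one summands. -/
def rankOneSums {n₁ n₂ n₃ : ℕ} (T : Fin n₁ → Fin n₂ → Fin n₃ → ℝ) : Set ℕ :=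
  {r | ∃ (u : Fin r → Fin n₁ → ℝ) (v : Fin r → Fin n₂ → ℝ) (w : Fin r → Fin n₃ → ℝ),
    ∀ i j k, T i j k = ∑ t, u t i * v t j * w t k}

lemma exists_minor {n : ℕ} (x y : Fin n → ℝ) (h : LinearIndependent ℝ ![x, y]) :
    ∃ i j, x i * y j - y i * x j ≠ 0 := by
  by_contra hc
  push_neg at hc
  rw [linearIndependent_fin2] at h
  obtain ⟨hy, hax⟩ := h
  by_cases hy0 : ∀ j, y j = 0
  · exact hy (funext hy0)
  · push_neg at hy0
    obtain ⟨j, hj⟩ := hy0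
    apply hax (x j / y j)
    funext i
    have := hc i j
    have : x i * y j = y i * x j := by linarith
    simp only [Matrix.cons_val_one, Matrix.cons_val_zero, Matrix.head_cons, Pi.smul_apply, smul_eq_mul]
    field_simp
    linarith [this]

theorem C2_rank_two {n m : ℕ} (x y : Fin n → ℝ) (z : Fin m → ℝ)
    (h : LinearIndependent ℝ ![x, y]) (hz : z ≠ 0) :
    IsLeast (rankOneSums (C2 x y z)) 2 := by
  obtain ⟨i0, j0, hminor⟩ := exists_minor x y h
  obtain ⟨k0, hk0⟩ := Function.ne_iff.mp hz
  have hT : C2 x y z i0 j0 k0 ≠ 0 := by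
    simp only [C2]
    have : x i0 * y j0 * z k0 - y i0 * x j0 * z k0
        = (x i0 * y j0 - y i0 * x j0) * z k0 := by ring
    rw [this]
    exact mul_ne_zero (by norm_num) (mul_ne_zero hminor hk0)
  constructor
  · refine ⟨![x, y], ![y, x], ![(1/2 : ℝ) • z, -((1/2 : ℝ) • z)], ?_⟩
    intro i j k
    simp [C2, Fin.sum_univ_two]
    ring
  · rintro r ⟨u, v, w, hw⟩
    by_contra hr
    push_neg at hr
    interval_cases r
    · simp at hw
      exact hT (hw i0 j0 k0)
    · simp [Fin.sum_univ_one] at hw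
      have h1 : u 0 i0 * v 0 j0 * w 0 k0 ≠ 0 := by rw [← hw]; exact hT
      have h2 : u 0 i0 * v 0 i0 * w 0 k0 = 0 := by
        rw [← hw]; simp [C2]; ring
      have h3 : u 0 j0 * v 0 j0 * w 0 k0 = 0 := by
        rw [← hw]; simp [C2]; ring
      have hanti : C2 x y z j0 i0 k0 = -C2 x y z i0 j0 k0 := by simp [C2]; ring
      have h4 : u 0 j0 * v 0 i0 * w 0 k0 ≠ 0 := by
        rw [← hw, hanti]
        simpa using hT
      have hu : u 0 i0 ≠ 0 := fun e => h1 (by simp [e])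
      have hv : v 0 j0 ≠ 0 := fun e => h1 (by simp [e])
      have hwk : w 0 k0 ≠ 0 := fun e => h1 (by simp [e])
      have hvi : v 0 i0 = 0 := by
        rcases mul_eq_zero.mp h2 with h' | h'
        · rcases mul_eq_zero.mp h' with h'' | h''
          · exact absurd h'' hu
          · exact h''
        · exact absurd h' hwk
      exact h4 (by simp [hvi])
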